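/- Let {v_k} be a sequence of nonnegative random variables on a probability space with E[v_0] < ∞, and let {α_k} and {β_k} be deterministic scalar sequences with 0 ≤ α_k ≤ 1 and β_k ≥ 0 for all k, ∑_{k=0}^∞ α_k = ∞, ∑_{k=0}^∞ β_k < ∞, and lim_{k→∞} β_k/α_k = 0. If E[v_{k+1} | v_0,…,v_k] ≤ (1 − α_k) v_k + β_k almost surely for all k ≥ 0, then v_k → 0 almost surely. -/

import Mathlib

open MeasureTheory Filter

lemma det_lemma (a α β : ℕ → ℝ) (ha : ∀ k, 0 ≤ a k)
    (hα : ∀ k, 0 ≤ α k ∧ α k ≤ 1) (hβ : ∀ k, 0 ≤ β k)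
    (hα_div : Tendsto (fun N => ∑ k ∈ Finset.range N, α k) atTop atTop)
    (hβ_sum : Summable β)
    (hrec : ∀ k, a (k+1) ≤ (1 - α k) * a k + β k) :
    Tendsto a atTop (nhds 0) := by
  have key : ∀ K n, K ≤ n →
      a n ≤ (∏ k ∈ Finset.Ico K n, (1 - α k)) * a K + ∑ k ∈ Finset.Ico K n, β k := by
    intro K n hKn
    induction n with
    | zero =>
      have : K = 0 := Nat.le_zero.mp hKn
      subst this; simp
    | succ n ih =>
      rcases Nat.lt_or_ge K (n+1) with h | h
      · have hKn' : K ≤ n := Nat.lt_succ_iff.mp h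
        have ihn := ih hKn'
        have hprodnn : 0 ≤ ∏ k ∈ Finset.Ico K n, (1 - α k) :=
          Finset.prod_nonneg fun k _ => by linarith [(hα k).2]
        have hsum_nn : 0 ≤ ∑ k ∈ Finset.Ico K n, β k :=
          Finset.sum_nonneg fun k _ => hβ k
        have h1 : a (n+1) ≤ (1 - α n) * a n + β n := hrec n
        have h2 : (1 - α n) * a n ≤ (1 - α n) * ((∏ k ∈ Finset.Ico K n, (1 - α k)) * a K + ∑ k ∈ Finset.Ico K n, β k) :=
          mul_le_mul_of_nonneg_left ihn (by linarith [(hα n).2])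
        have h2' : (1 - α n) * ((∏ k ∈ Finset.Ico K n, (1 - α k)) * a K + ∑ k ∈ Finset.Ico K n, β k)
            = ((∏ k ∈ Finset.Ico K n, (1 - α k)) * (1 - α n)) * a K + (1 - α n) * ∑ k ∈ Finset.Ico K n, β k := by
          ring
        have h3 : (1 - α n) * (∑ k ∈ Finset.Ico K n, β k) ≤ ∑ k ∈ Finset.Ico K n, β k := by
          nlinarith [(hα n).1]
        rw [Finset.prod_Ico_succ_top hKn', Finset.sum_Ico_succ_top hKn']
        linarith [h2'.le, h2'.ge]
      · have : K = n+1 := le_antisymm hKn h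
        simp [this]
  have htail : Tendsto (fun K => ∑' j, β (j + K)) atTop (nhds 0) := tendsto_sum_nat_add β
  have hsum_le_tail : ∀ K n, ∑ k ∈ Finset.Ico K n, β k ≤ ∑' j, β (j + K) := by
    intro K n
    have h1 : ∑ k ∈ Finset.Ico K n, β k = ∑ j ∈ Finset.range (n - K), β (j + K) := by
      rw [Finset.sum_Ico_eq_sum_range]
      exact Finset.sum_congr rfl fun j _ => by ring_nf
    rw [h1]
    exact Summable.sum_le_tsum _ (fun j _ => hβ _) (hβ_sum.comp_injective (add_left_injective K))
  have hprod : ∀ K, Tendsto (fun n => ∏ k ∈ Finset.Ico K n, (1 - α k)) atTop (nhds 0) := by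
    intro K
    have hub : ∀ n, ∏ k ∈ Finset.Ico K n, (1 - α k) ≤ Real.exp (-(∑ k ∈ Finset.Ico K n, α k)) := by
      intro n
      calc ∏ k ∈ Finset.Ico K n, (1 - α k) ≤ ∏ k ∈ Finset.Ico K n, Real.exp (-(α k)) := by
            apply Finset.prod_le_prod
            · intro k _; linarith [(hα k).2]
            · intro k _; linarith [Real.add_one_le_exp (-(α k))]
        _ = Real.exp (∑ k ∈ Finset.Ico K n, -(α k)) := (Real.exp_sum _ _).symm
        _ = Real.exp (-∑ k ∈ Finset.Ico K n, α k) := by rw [Finset.sum_neg_distrib]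
    have hlb : ∀ n, 0 ≤ ∏ k ∈ Finset.Ico K n, (1 - α k) :=
      fun n => Finset.prod_nonneg fun k _ => by linarith [(hα k).2]
    have hsum_top : Tendsto (fun n => ∑ k ∈ Finset.Ico K n, α k) atTop atTop := by
      have h' : Tendsto (fun n => (∑ k ∈ Finset.range n, α k) + -(∑ k ∈ Finset.range K, α k)) atTop atTop :=
        tendsto_atTop_add_const_right _ _ hα_div
      apply h'.congr'
      filter_upwards [eventually_ge_atTop K] with n hn
      rw [Finset.sum_Ico_eq_sub _ hn]; ring
    have hexp : Tendsto (fun n => Real.exp (-(∑ k ∈ Finset.Ico K n, α k))) atTop (nhds 0) :=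
      Real.tendsto_exp_atBot.comp (tendsto_neg_atTop_atBot.comp hsum_top)
    exact squeeze_zero hlb hub hexp
  rw [Metric.tendsto_atTop]
  intro ε hε
  obtain ⟨K, hK⟩ := (Metric.tendsto_atTop.mp htail (ε/2) (by linarith)).imp (fun K h => h K le_rfl)
  have haK : (0:ℝ) < 2 * (a K + 1) := by nlinarith [ha K]
  obtain ⟨N, hN⟩ := Metric.tendsto_atTop.mp (hprod K) (ε/(2 * (a K + 1))) (div_pos hε haK)
  refine ⟨max K N, fun n hn => ?_⟩
  have hKn : K ≤ n := le_trans (le_max_left _ _) hn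
  have hNn : N ≤ n := le_trans (le_max_right _ _) hn
  have h1 := key K n hKn
  have h2 := hN n hNn
  rw [Real.dist_eq, sub_zero, abs_lt] at h2 ⊢
  have hprodnn : 0 ≤ ∏ k ∈ Finset.Ico K n, (1 - α k) :=
    Finset.prod_nonneg fun k _ => by linarith [(hα k).2]
  have h3 : (∏ k ∈ Finset.Ico K n, (1 - α k)) * a K ≤ (ε/(2 * (a K + 1))) * a K :=
    mul_le_mul_of_nonneg_right (le_of_lt h2.2) (ha K)
  have h4 : (ε/(2 * (a K + 1))) * a K < ε/2 := by
    rw [div_mul_eq_mul_div, div_lt_iff₀ haK]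
    nlinarith [ha K]
  have h5 : ∑ k ∈ Finset.Ico K n, β k ≤ ∑' j, β (j + K) := hsum_le_tail K n
  have h6 : |∑' j, β (j + K)| < ε/2 := by
    have := hK; rw [Real.dist_eq, sub_zero] at this; exact this
  constructor
  · linarith [ha n]
  · have := abs_lt.mp h6
    linarith



/-- Robbins–Siegmund-type lemma, Polyak.  Let `{v k}` be nonnegative
random variables with `E[v 0] < ∞` (here: each `v k` integrable, which is implied),
and deterministic sequences `{α k}`, `{β k}` with `0 ≤ α k ≤ 1`, `β k ≥ 0`,
`∑ α k = ∞`, `∑ β k < ∞` and `β k / α k → 0`.  If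
`E[v (k+1) | σ(v 0, …, v k)] ≤ (1 - α k) v k + β k` a.s. for all `k`,
then `v k → 0` almost surely. -/
theorem stmt0 {Ω : Type*} [MeasurableSpace Ω] (μ : Measure Ω) [IsProbabilityMeasure μ]
    (v : ℕ → Ω → ℝ) (α β : ℕ → ℝ)
    (hv_meas : ∀ k, Measurable (v k))
    (hv_nonneg : ∀ k ω, 0 ≤ v k ω)
    (hv_int : ∀ k, Integrable (v k) μ)
    (hα : ∀ k, 0 ≤ α k ∧ α k ≤ 1)
    (hβ : ∀ k, 0 ≤ β k)
    (hα_div : Tendsto (fun N => ∑ k ∈ Finset.range N, α k) atTop atTop)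
    (hβ_sum : Summable β)
    (hβα : Tendsto (fun k => β k / α k) atTop (nhds 0))
    (hrec : ∀ k, ∀ᵐ ω ∂μ,
      (μ[v (k + 1) | ⨆ i ∈ Finset.range (k + 1),
          MeasurableSpace.comap (v i) inferInstance]) ω ≤ (1 - α k) * v k ω + β k) :
    ∀ᵐ ω ∂μ, Tendsto (fun k => v k ω) atTop (nhds 0) := by
  classical
  -- the filtration
  set ℱ : Filtration ℕ ‹MeasurableSpace Ω› :=
    { seq := fun k => ⨆ i ∈ Finset.range (k + 1), MeasurableSpace.comap (v i) inferInstance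
      mono' := by
        intro i j hij
        apply biSup_mono
        intro x hx
        simp only [Finset.mem_range] at hx ⊢
        omega
      le' := fun k => by
        apply iSup_le; intro i; apply iSup_le; intro _
        exact measurable_iff_comap_le.mp (hv_meas i) } with hℱ
  have hℱk : ∀ k, (ℱ k : MeasurableSpace Ω)
      = ⨆ i ∈ Finset.range (k + 1), MeasurableSpace.comap (v i) inferInstance := fun k => rfl
  -- tail sums
  set r : ℕ → ℝ := fun k => ∑' j, β (j + k) with hr
  have hr_nonneg : ∀ k, 0 ≤ r k := fun k => tsum_nonneg fun j => hβ _
  have hr_sum : ∀ k, Summable fun j => β (j + k) :=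
    fun k => hβ_sum.comp_injective (add_left_injective k)
  have hr_rec : ∀ k, r k = β k + r (k + 1) := by
    intro k
    have h0 := Summable.tsum_eq_zero_add (hr_sum k)
    simp only [zero_add] at h0
    rw [hr]
    simp only []
    rw [h0]
    congr 1
    apply tsum_congr; intro j; congr 1; omega
  have hr_to0 : Tendsto r atTop (nhds 0) := tendsto_sum_nat_add β
  -- the supermartingale
  set w : ℕ → Ω → ℝ := fun k => v k + fun _ => r k with hw
  have hw_int : ∀ k, Integrable (w k) μ := fun k => (hv_int k).add (integrable_const _)
  have hw_adapted : StronglyAdapted ℱ w := by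
    intro k
    apply Measurable.stronglyMeasurable
    apply Measurable.add _ measurable_const
    have h1 : Measurable[MeasurableSpace.comap (v k) inferInstance] (v k) :=
      measurable_iff_comap_le.mpr le_rfl
    exact h1.mono (le_iSup_of_le k (le_iSup_of_le (Finset.self_mem_range_succ k) le_rfl)) le_rfl
  have hw_super : Supermartingale w ℱ μ := by
    apply supermartingale_nat hw_adapted hw_int
    intro k
    have hadd : μ[w (k+1)|ℱ k] =ᵐ[μ] μ[v (k+1)|ℱ k] + μ[(fun _ => r (k+1))|ℱ k] :=
      condExp_add (hv_int (k+1)) (integrable_const _) _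
    have hc : μ[(fun _ : Ω => r (k+1))|ℱ k] = fun _ => r (k+1) := condExp_const (ℱ.le k) _
    filter_upwards [hadd, hrec k] with ω h1 h2
    have h2' : (μ[v (k + 1)|ℱ k]) ω ≤ (1 - α k) * v k ω + β k := h2
    have hαk := hα k
    have hvk := hv_nonneg k ω
    have e1 : (μ[w (k+1)|ℱ k]) ω = (μ[v (k+1)|ℱ k]) ω + (μ[(fun _ : Ω => r (k+1))|ℱ k]) ω := h1
    have e2 : (μ[(fun _ : Ω => r (k+1))|ℱ k]) ω = r (k+1) := congrFun hc ω
    have e3 : w k ω = v k ω + r k := rfl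
    have e4 := hr_rec k
    show (μ[w (k+1)|ℱ k]) ω ≤ w k ω
    rw [e3]
    nlinarith [mul_nonneg hαk.1 hvk]
  -- expectation recursion: E[v k] → 0
  have hEv : Tendsto (fun k => ∫ ω, v k ω ∂μ) atTop (nhds 0) := by
    apply det_lemma _ α β (fun k => integral_nonneg (hv_nonneg k)) hα hβ hα_div hβ_sum
    intro k
    have h1 : ∫ ω, v (k+1) ω ∂μ = ∫ ω, (μ[v (k+1)|ℱ k]) ω ∂μ := (integral_condExp (ℱ.le k)).symm
    have hRHSint : Integrable (fun ω => (1 - α k) * v k ω + β k) μ :=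
      ((hv_int k).const_mul _).add (integrable_const _)
    have h2 : ∫ ω, (μ[v (k+1)|ℱ k]) ω ∂μ ≤ ∫ ω, ((1 - α k) * v k ω + β k) ∂μ :=
      integral_mono_ae integrable_condExp hRHSint (hrec k)
    have h3 : ∫ ω, ((1 - α k) * v k ω + β k) ∂μ = (1 - α k) * (∫ ω, v k ω ∂μ) + β k := by
      rw [integral_add ((hv_int k).const_mul _) (integrable_const _), integral_const_mul]
      simp
    rw [h1]; rw [h3] at h2; exact h2
  -- L¹ bound of the supermartingale
  have hwle : ∀ n, ∫ ω, w n ω ∂μ ≤ ∫ ω, w 0 ω ∂μ := by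
    intro n
    have h := hw_super.2.1 0 n (Nat.zero_le n)
    calc ∫ ω, w n ω ∂μ = ∫ ω, (μ[w n|ℱ 0]) ω ∂μ := (integral_condExp (ℱ.le 0)).symm
      _ ≤ ∫ ω, w 0 ω ∂μ := integral_mono_ae integrable_condExp (hw_int 0) h
  have hw_nonneg : ∀ n ω, 0 ≤ w n ω := by
    intro n ω
    have h1 := hv_nonneg n ω
    have h2 := hr_nonneg n
    show 0 ≤ v n ω + r n
    linarith
  set R : NNReal := (∫ ω, w 0 ω ∂μ).toNNReal with hRdef
  have hbdd : ∀ n, eLpNorm ((-w) n) 1 μ ≤ (R : ENNReal) := by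
    intro n
    have hnn : eLpNorm ((-w) n) 1 μ = eLpNorm (w n) 1 μ := eLpNorm_neg _ _ _
    rw [hnn, eLpNorm_one_eq_lintegral_enorm]
    have heq : ∀ ω, ‖w n ω‖ₑ = ENNReal.ofReal (w n ω) :=
      fun ω => Real.enorm_eq_ofReal (hw_nonneg n ω)
    calc ∫⁻ ω, ‖w n ω‖ₑ ∂μ = ∫⁻ ω, ENNReal.ofReal (w n ω) ∂μ := lintegral_congr heq
      _ = ENNReal.ofReal (∫ ω, w n ω ∂μ) :=
          (ofReal_integral_eq_lintegral_ofReal (hw_int n) (ae_of_all _ (hw_nonneg n))).symm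
      _ ≤ ENNReal.ofReal (∫ ω, w 0 ω ∂μ) := ENNReal.ofReal_le_ofReal (hwle n)
      _ = (R : ENNReal) := rfl
  have hconv := hw_super.neg.exists_ae_tendsto_of_bdd hbdd
  -- Fatou: liminf of ofReal (v k ·) is 0 a.e.
  have hmeasF : ∀ k, Measurable fun ω => ENNReal.ofReal (v k ω) :=
    fun k => ENNReal.measurable_ofReal.comp (hv_meas k)
  have hlin : ∫⁻ ω, Filter.liminf (fun k => ENNReal.ofReal (v k ω)) atTop ∂μ = 0 := by
    have hF : ∀ k, ∫⁻ ω, ENNReal.ofReal (v k ω) ∂μ = ENNReal.ofReal (∫ ω, v k ω ∂μ) :=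
      fun k => (ofReal_integral_eq_lintegral_ofReal (hv_int k) (ae_of_all _ (hv_nonneg k))).symm
    have hlim : Tendsto (fun k => ∫⁻ ω, ENNReal.ofReal (v k ω) ∂μ) atTop (nhds 0) := by
      simp_rw [hF]
      have h := (ENNReal.continuous_ofReal.tendsto 0).comp hEv
      simpa [Function.comp_def] using h
    refine le_antisymm ?_ (zero_le)
    calc ∫⁻ ω, Filter.liminf (fun k => ENNReal.ofReal (v k ω)) atTop ∂μ
        ≤ Filter.liminf (fun k => ∫⁻ ω, ENNReal.ofReal (v k ω) ∂μ) atTop :=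
          lintegral_liminf_le hmeasF
      _ = 0 := hlim.liminf_eq
  have hfatou : ∀ᵐ ω ∂μ, Filter.liminf (fun k => ENNReal.ofReal (v k ω)) atTop = 0 := by
    have hm : Measurable fun ω => Filter.liminf (fun k => ENNReal.ofReal (v k ω)) atTop :=
      Measurable.liminf fun k => hmeasF k
    exact (lintegral_eq_zero_iff hm).mp hlin
  -- combine
  filter_upwards [hconv, hfatou] with ω hcex h0
  obtain ⟨c, hc⟩ := hcex
  have hw_tendsto : Tendsto (fun n => w n ω) atTop (nhds (-c)) := by
    have h := hc.neg
    simp only [Pi.neg_apply, neg_neg] at h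
    exact h
  have hv_tendsto : Tendsto (fun n => v n ω) atTop (nhds (-c)) := by
    have heq : (fun n => v n ω) = fun n => w n ω - r n := by
      funext n; show v n ω = v n ω + r n - r n; ring
    rw [heq]
    simpa using hw_tendsto.sub hr_to0
  have h1 : Tendsto (fun n => ENNReal.ofReal (v n ω)) atTop (nhds (ENNReal.ofReal (-c))) :=
    (ENNReal.continuous_ofReal.tendsto _).comp hv_tendsto
  have h2 : ENNReal.ofReal (-c) = 0 := h1.liminf_eq ▸ h0
  have h3 : -c ≤ 0 := by simpa [ENNReal.ofReal_eq_zero] using h2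
  have h4 : 0 ≤ -c := ge_of_tendsto' hv_tendsto (fun n => hv_nonneg n ω)
  have h5 : -c = 0 := le_antisymm h3 h4
  rw [h5] at hv_tendsto
  exact hv_tendsto
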